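/- Let X, Y be real symmetric n×n matrices with X positive definite, let G = [[X + Y X⁻¹ Y, Y X⁻¹],[X⁻¹ Y, X⁻¹]] and S = [[X^{1/2}, 0],[X^{−1/2} Y, X^{−1/2}]]. Then the Wigner covariance ellipsoid {z ∈ ℝ^{2n} : Gz·z ≤ ℏ} of the generalized coherent state ψ_{X,Y} equals S⁻¹(B^{2n}(√ℏ)), where S⁻¹ = [[X^{−1/2}, 0],[−Y X^{−1/2}, X^{1/2}]] is symplectic; in particular the covariance ellipsoid is a quantum blob. -/

import Mathlib

open Matrix

/-- The positive semidefinite square root of a positive semidefinite matrix (the definition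
`Matrix.PosSemidef.sqrt` of the older Mathlib, since removed). -/
noncomputable def Matrix.PosSemidef.sqrt {n : Type*} [Fintype n] [DecidableEq n]
    {A : Matrix n n ℝ} (hA : A.PosSemidef) : Matrix n n ℝ :=
  hA.1.eigenvectorUnitary.1 * diagonal ((↑) ∘ Real.sqrt ∘ hA.1.eigenvalues) *
    (star hA.1.eigenvectorUnitary : Matrix n n ℝ)

theorem Matrix.PosSemidef.sqrt_mul_self' {n : Type*} [Fintype n] [DecidableEq n]
    {A : Matrix n n ℝ} (hA : A.PosSemidef) : hA.sqrt * hA.sqrt = A := by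
  have hs := hA.1.spectral_theorem
  rw [Unitary.conjStarAlgAut_apply] at hs
  have hU : (star hA.1.eigenvectorUnitary : Matrix n n ℝ) * hA.1.eigenvectorUnitary.1 = 1 :=
    Unitary.coe_star_mul_self _
  unfold Matrix.PosSemidef.sqrt
  conv_rhs => rw [hs]
  simp only [Matrix.mul_assoc]
  rw [← Matrix.mul_assoc (star _ : Matrix n n ℝ) hA.1.eigenvectorUnitary.1, hU, Matrix.one_mul,
    ← Matrix.mul_assoc (diagonal _), diagonal_mul_diagonal]
  congr 3
  funext i
  simp [Real.mul_self_sqrt (hA.eigenvalues_nonneg i)]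

theorem Matrix.PosSemidef.sqrt_transpose' {n : Type*} [Fintype n] [DecidableEq n]
    {A : Matrix n n ℝ} (hA : A.PosSemidef) : hA.sqrtᵀ = hA.sqrt := by
  unfold Matrix.PosSemidef.sqrt
  rw [transpose_mul, transpose_mul, diagonal_transpose, Matrix.mul_assoc]
  have h1 : (star hA.1.eigenvectorUnitary : Matrix n n ℝ)ᵀ = hA.1.eigenvectorUnitary.1 := by
    rw [star_eq_conjTranspose, conjTranspose_eq_transpose_of_trivial,
      transpose_transpose]
  have h2 : (hA.1.eigenvectorUnitary.1)ᵀ = (star hA.1.eigenvectorUnitary : Matrix n n ℝ) := by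
    rw [star_eq_conjTranspose, conjTranspose_eq_transpose_of_trivial]
  rw [h1, h2]

/-- The standard symplectic matrix `J = [[0, I],[−I, 0]]`. -/
def stdJ (n : ℕ) : Matrix (Fin n ⊕ Fin n) (Fin n ⊕ Fin n) ℝ :=
  fromBlocks 0 1 (-1) 0

/-- A real `2n×2n` matrix is symplectic if `Sᵀ J S = J`. -/
def IsSymplecticMat {n : ℕ} (S : Matrix (Fin n ⊕ Fin n) (Fin n ⊕ Fin n) ℝ) : Prop :=
  Sᵀ * stdJ n * S = stdJ n

/-- The closed Euclidean ball of radius `R` centered at `0` in `ℝ^{2n}`. -/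
def euclBall (n : ℕ) (R : ℝ) : Set (Fin n ⊕ Fin n → ℝ) :=
  {z | ∑ i, (z i) ^ 2 ≤ R ^ 2}

/-- The Wigner covariance ellipsoid `{z : Gz·z ≤ ℏ}` of `ψ_{X,Y}`, with
`G = [[X + YX⁻¹Y, YX⁻¹],[X⁻¹Y, X⁻¹]]` and `S = [[X^{1/2}, 0],[X^{−1/2}Y, X^{−1/2}]]`, equals
`S⁻¹(B^{2n}(√ℏ))` where `S⁻¹ = [[X^{−1/2}, 0],[−YX^{−1/2}, X^{1/2}]]` is symplectic; in
particular the covariance ellipsoid is a quantum blob. -/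
theorem covariance_ellipsoid_is_quantum_blob
    (n : ℕ) (hn : 1 ≤ n) (ℏ : ℝ) (hℏ : 0 < ℏ)
    (X Y : Matrix (Fin n) (Fin n) ℝ)
    (hX : X.IsSymm) (hY : Y.IsSymm) (hXpd : X.PosDef) :
    (fromBlocks hXpd.posSemidef.sqrt 0
        (hXpd.posSemidef.sqrt⁻¹ * Y) hXpd.posSemidef.sqrt⁻¹)⁻¹ =
        fromBlocks hXpd.posSemidef.sqrt⁻¹ 0
          (-(Y * hXpd.posSemidef.sqrt⁻¹)) hXpd.posSemidef.sqrt ∧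
      IsSymplecticMat
        (fromBlocks hXpd.posSemidef.sqrt⁻¹ 0
          (-(Y * hXpd.posSemidef.sqrt⁻¹)) hXpd.posSemidef.sqrt) ∧
      {z : Fin n ⊕ Fin n → ℝ |
          z ⬝ᵥ (fromBlocks (X + Y * X⁻¹ * Y) (Y * X⁻¹) (X⁻¹ * Y) X⁻¹).mulVec z ≤ ℏ} =
        (fun z => (fromBlocks hXpd.posSemidef.sqrt⁻¹ 0
          (-(Y * hXpd.posSemidef.sqrt⁻¹)) hXpd.posSemidef.sqrt).mulVec z) ''
            euclBall n (Real.sqrt ℏ) := by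
  set R := hXpd.posSemidef.sqrt with hRdef
  have hRR : R * R = X := hXpd.posSemidef.sqrt_mul_self'
  have hRsymm : Rᵀ = R := by
    exact hXpd.posSemidef.sqrt_transpose'
  have hRunit : IsUnit R.det := by
    have hmul : R.det * R.det = X.det := by rw [← det_mul, hRR]
    refine isUnit_iff_ne_zero.mpr fun h => ?_
    rw [h, mul_zero] at hmul
    exact hXpd.det_pos.ne' hmul.symm
  have hRinv : R * R⁻¹ = 1 := mul_nonsing_inv R hRunit
  have hRinv' : R⁻¹ * R = 1 := nonsing_inv_mul R hRunit
  have hRinvsymm : R⁻¹ᵀ = R⁻¹ := by rw [transpose_nonsing_inv, hRsymm]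
  have hXinv : X⁻¹ = R⁻¹ * R⁻¹ := by rw [← hRR, Matrix.mul_inv_rev]
  set S := fromBlocks R 0 (R⁻¹ * Y) R⁻¹ with hSdef
  set T := fromBlocks R⁻¹ 0 (-(Y * R⁻¹)) R with hTdef
  have hST : S * T = 1 := by
    rw [hSdef, hTdef, fromBlocks_multiply]
    rw [show R * R⁻¹ + 0 * -(Y * R⁻¹) = 1 by simp [hRinv],
      show R * 0 + 0 * R = 0 by simp,
      show R⁻¹ * Y * R⁻¹ + R⁻¹ * -(Y * R⁻¹) = 0 by
        rw [mul_neg, Matrix.mul_assoc, add_neg_eq_zero],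
      show R⁻¹ * Y * 0 + R⁻¹ * R = 1 by simp [hRinv'],
      fromBlocks_one]
  have hTS : T * S = 1 := mul_eq_one_comm.mp hST
  have hinv : S⁻¹ = T := inv_eq_right_inv hST
  refine ⟨hinv, ?_, ?_⟩
  · unfold IsSymplecticMat stdJ
    rw [hTdef, fromBlocks_transpose, transpose_neg, transpose_mul, hRinvsymm, hRsymm, hY.eq,
      fromBlocks_multiply, fromBlocks_multiply]
    congr 1 <;> simp [Matrix.mul_assoc, hRinv, hRinv']
  · have hG : fromBlocks (X + Y * X⁻¹ * Y) (Y * X⁻¹) (X⁻¹ * Y) X⁻¹ = Sᵀ * S := by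
      rw [hSdef, fromBlocks_transpose, fromBlocks_multiply, hRsymm, hRinvsymm,
        transpose_mul, hRinvsymm, hY.eq, transpose_zero]
      rw [hRR, hXinv]
      congr 1 <;> simp [Matrix.mul_assoc]
    have hdot : ∀ z : Fin n ⊕ Fin n → ℝ,
        z ⬝ᵥ (Sᵀ * S).mulVec z = ∑ i, (S.mulVec z i) ^ 2 := by
      intro z
      rw [← mulVec_mulVec, dotProduct_mulVec, vecMul_transpose]
      simp [dotProduct, sq]
    ext z
    simp only [Set.mem_setOf_eq, Set.mem_image]
    rw [hG, hdot]
    constructor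
    · intro hz
      refine ⟨S.mulVec z, ?_, ?_⟩
      · simpa [euclBall, Real.sq_sqrt hℏ.le] using hz
      · rw [mulVec_mulVec, hTS, one_mulVec]
    · rintro ⟨w, hw, rfl⟩
      rw [mulVec_mulVec, hST, one_mulVec]
      simpa [euclBall, Real.sq_sqrt hℏ.le] using hw
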